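/- arXiv:math-ph/0505049 — 3 statements merged into one kernel-verified Lean document; each statement's English description precedes it below -/
import Mathlib

section
/- (Minlos/Mecke-type combinatorial lemma for Lebesgue–Poisson measure) For all non-negative measurable functions G : Γ₀ → ℝ and H : Γ₀ × Γ₀ → ℝ, one has ∫_{Γ₀} ∫_{Γ₀} G(η ∪ ξ) H(ξ, η) dλ_σ(η) dλ_σ(ξ) = ∫_{Γ₀} G(η) Σ_{ξ ⊆ η} H(ξ, η \ ξ) dλ_σ(η). -/
open MeasureTheory ENNReal

/-- The Lebesgue–Poisson integral `∫_{Γ₀} G dλ_σ = Σₙ (1/n!) ∫_{Xⁿ} G({x₁,…,xₙ}) dσ^{⊗n}`,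
with finite configurations modelled as finite multisets. -/
noncomputable def lebesguePoissonLIntegral {X : Type*} [MeasurableSpace X] (σ : Measure X)
    (G : Multiset X → ℝ≥0∞) : ℝ≥0∞ :=
  ∑' n : ℕ, (n.factorial : ℝ≥0∞)⁻¹ *
    ∫⁻ x : Fin n → X, G ↑(List.ofFn x) ∂(Measure.pi fun _ => σ)

namespace LPAux

theorem ofFn_coe {X : Type*} {k : ℕ} (f : Fin k → X) :
    (↑(List.ofFn f) : Multiset X) = Multiset.map f Finset.univ.val := by
  simp [List.ofFn_eq_map, Finset.univ, Fintype.elems, Fin.fintype]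

theorem powerset_map {α β : Type*} (f : α → β) (s : Multiset α) :
    (s.map f).powerset = s.powerset.map (Multiset.map f) := by
  refine Quotient.inductionOn s fun l => ?_
  simp only [Multiset.quot_mk_to_coe, Multiset.map_coe, Multiset.powerset_coe', List.map_map]
  rw [List.sublists'_map, List.map_map]
  rfl

theorem antidiagonal_map {α β : Type*} (f : α → β) (s : Multiset α) :
    (s.map f).antidiagonal = s.antidiagonal.map (Prod.map (Multiset.map f) (Multiset.map f)) := by
  classical
  rw [Multiset.antidiagonal_eq_map_powerset, Multiset.antidiagonal_eq_map_powerset,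
    powerset_map, Multiset.map_map, Multiset.map_map]
  refine Multiset.map_congr rfl fun t ht => ?_
  have hle : t ≤ s := Multiset.mem_powerset.mp ht
  have : s.map f = t.map f + (s - t).map f := by
    rw [← Multiset.map_add]; congr 1; exact (add_tsub_cancel_of_le hle).symm
  simp [Function.comp, Prod.map, this, add_tsub_cancel_left]

theorem powerset_val_sum {α M : Type*} [AddCommMonoid M] (s : Finset α) (g : Multiset α → M) :
    (s.val.powerset.map g).sum = ∑ T ∈ s.powerset, g T.val := by
  rw [Finset.sum, show s.powerset.val = s.val.powerset.pmap Finset.mk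
      (fun _t h => Multiset.nodup_of_le (Multiset.mem_powerset.1 h) s.nodup) from rfl,
    Multiset.map_pmap]
  simp [Multiset.pmap_eq_map]

theorem antidiag_sum {X : Type*} {N : ℕ} (H : Multiset X → Multiset X → ℝ≥0∞) (x : Fin N → X) :
    (((↑(List.ofFn x) : Multiset X).antidiagonal).map fun p => H p.1 p.2).sum
      = ∑ T : Finset (Fin N), H (Multiset.map x T.val) (Multiset.map x Tᶜ.val) := by
  classical
  rw [ofFn_coe, antidiagonal_map, Multiset.map_map,
    Multiset.antidiagonal_eq_map_powerset, Multiset.map_map]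
  simp only [Function.comp_def, Prod.map_apply]
  rw [powerset_val_sum Finset.univ
    (fun t => H (Multiset.map x ((Finset.univ.val : Multiset (Fin N)) - t)) (Multiset.map x t))]
  rw [Finset.powerset_univ]
  refine Fintype.sum_bijective compl compl_involutive.bijective _ _ fun T => ?_
  have h1 : (Finset.univ.val : Multiset (Fin N)) - T.val = Tᶜ.val := by
    rw [← Finset.sdiff_val, ← Finset.compl_eq_univ_sdiff]
  rw [h1, compl_compl]

theorem fact_arith {N m : ℕ} (hm : m ≤ N) :
    ((N.factorial : ℝ≥0∞))⁻¹ * (N.choose m : ℝ≥0∞)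
      = (m.factorial : ℝ≥0∞)⁻¹ * ((N - m).factorial : ℝ≥0∞)⁻¹ := by
  have hc0 : (N.choose m : ℝ≥0∞) ≠ 0 := by
    simpa using (Nat.choose_pos hm).ne'
  have key : (N.factorial : ℝ≥0∞)
      = (N.choose m : ℝ≥0∞) * (m.factorial : ℝ≥0∞) * ((N - m).factorial : ℝ≥0∞) := by
    rw [← Nat.cast_mul, ← Nat.cast_mul, Nat.choose_mul_factorial_mul_factorial hm]
  rw [key, ENNReal.mul_inv (by simp [Nat.factorial_ne_zero])
      (Or.inr (Nat.cast_ne_zero.mpr (Nat.factorial_ne_zero _))),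
      ENNReal.mul_inv (Or.inl hc0) (by simp), mul_comm, ← mul_assoc, ← mul_assoc,
      ENNReal.mul_inv_cancel hc0 (by simp), one_mul]

theorem tsum_reindex (f : ℕ → ℕ → ℝ≥0∞) :
    (∑' N : ℕ, ∑ m ∈ Finset.range (N + 1), f m (N - m)) = ∑' m : ℕ, ∑' n : ℕ, f m n := by
  rw [← ENNReal.tsum_prod,
    ← Equiv.tsum_eq Finset.HasAntidiagonal.sigmaAntidiagonalEquivProd (fun p : ℕ × ℕ => f p.1 p.2),
    ENNReal.tsum_sigma']
  congr 1
  funext N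
  erw [Finset.tsum_subtype (Finset.HasAntidiagonal.antidiagonal N) (fun p : ℕ × ℕ => f p.1 p.2)]
  rw [Finset.Nat.sum_antidiagonal_eq_sum_range_succ_mk (fun p : ℕ × ℕ => f p.1 p.2)]

section
variable {X : Type*} [MeasurableSpace X] (σ : Measure X) [SigmaFinite σ]
  (G : Multiset X → ℝ≥0∞) (H : Multiset X → Multiset X → ℝ≥0∞)

theorem hpair (hG : ∀ n : ℕ, Measurable fun x : Fin n → X => G ↑(List.ofFn x))
    (hH : ∀ n m : ℕ, Measurable fun p : (Fin n → X) × (Fin m → X) =>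
        H ↑(List.ofFn p.1) ↑(List.ofFn p.2)) (m n : ℕ) :
    Measurable fun p : (Fin m → X) × (Fin n → X) =>
      G (↑(List.ofFn p.2) + ↑(List.ofFn p.1)) * H ↑(List.ofFn p.1) ↑(List.ofFn p.2) := by
  apply Measurable.mul
  · have happ : Measurable fun p : (Fin m → X) × (Fin n → X) => Fin.append p.2 p.1 := by
      apply measurable_pi_lambda; intro i
      induction i using Fin.addCases with
      | left i => simpa [Fin.append_left, Function.comp_def] using (measurable_pi_apply i).comp measurable_snd
      | right j => simpa [Fin.append_right, Function.comp_def] using (measurable_pi_apply j).comp measurable_fst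
    have hf : (fun p : (Fin m → X) × (Fin n → X) => G (↑(List.ofFn p.2) + ↑(List.ofFn p.1)))
        = (fun z : Fin (n + m) → X => G ↑(List.ofFn z)) ∘ (fun p => Fin.append p.2 p.1) := by
      funext p
      simp only [Function.comp_apply, List.ofFn_fin_append, ← Multiset.coe_add]
    rw [hf]
    exact (hG (n + m)).comp happ
  · exact hH m n

theorem measH {N : ℕ}
    (hH : ∀ n m : ℕ, Measurable fun p : (Fin n → X) × (Fin m → X) =>
        H ↑(List.ofFn p.1) ↑(List.ofFn p.2)) (T : Finset (Fin N)) :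
    Measurable fun x : Fin N → X =>
      H (Multiset.map x T.val) (Multiset.map x Tᶜ.val) := by
  classical
  set m := T.card
  set n := Tᶜ.card
  set embT : Fin m ↪o Fin N := T.orderEmbOfFin rfl with hembT
  set embC : Fin n ↪o Fin N := Tᶜ.orderEmbOfFin rfl with hembC
  have hTval : T.val = Multiset.map (embT ·) Finset.univ.val := by
    have h1 : Finset.univ.map embT.toEmbedding = T := by
      ext i
      simp only [Finset.mem_map, Finset.mem_univ, true_and]
      constructor
      · rintro ⟨j, rfl⟩; exact Finset.orderEmbOfFin_mem T rfl j
      · intro hi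
        have : i ∈ Set.range embT := by rw [Finset.range_orderEmbOfFin]; exact hi
        obtain ⟨j, rfl⟩ := this; exact ⟨j, rfl⟩
    conv_lhs => rw [← h1]
    rfl
  have hCval : Tᶜ.val = Multiset.map (embC ·) Finset.univ.val := by
    have h1 : Finset.univ.map embC.toEmbedding = Tᶜ := by
      ext i
      simp only [Finset.mem_map, Finset.mem_univ, true_and]
      constructor
      · rintro ⟨j, rfl⟩; exact Finset.orderEmbOfFin_mem Tᶜ rfl j
      · intro hi
        have : i ∈ Set.range embC := by rw [Finset.range_orderEmbOfFin]; exact hi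
        obtain ⟨j, rfl⟩ := this; exact ⟨j, rfl⟩
    conv_lhs => rw [← h1]
    rfl
  have hrw : (fun x : Fin N → X => H (Multiset.map x T.val) (Multiset.map x Tᶜ.val))
      = (fun q : (Fin m → X) × (Fin n → X) => H ↑(List.ofFn q.1) ↑(List.ofFn q.2))
        ∘ (fun x => (fun i => x (embT i), fun j => x (embC j))) := by
    funext x
    simp only [Function.comp_apply, ofFn_coe, hTval, hCval, Multiset.map_map]
  rw [hrw]
  exact (hH m n).comp ((measurable_pi_lambda _ fun i => measurable_pi_apply _).prodMk
    (measurable_pi_lambda _ fun j => measurable_pi_apply _))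

theorem transfer (hG : ∀ n : ℕ, Measurable fun x : Fin n → X => G ↑(List.ofFn x))
    (hH : ∀ n m : ℕ, Measurable fun p : (Fin n → X) × (Fin m → X) =>
        H ↑(List.ofFn p.1) ↑(List.ofFn p.2))
    {N m n : ℕ} (T : Finset (Fin N)) (hm : T.card = m) (hn : Tᶜ.card = n) :
    ∫⁻ x : Fin N → X, G ↑(List.ofFn x) * H (Multiset.map x T.val) (Multiset.map x Tᶜ.val)
        ∂(Measure.pi fun _ => σ)
      = ∫⁻ ξ : Fin m → X, ∫⁻ η : Fin n → X,
          G (↑(List.ofFn η) + ↑(List.ofFn ξ)) * H ↑(List.ofFn ξ) ↑(List.ofFn η)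
          ∂(Measure.pi fun _ => σ) ∂(Measure.pi fun _ => σ) := by
  classical
  set embT : Fin m ↪o Fin N := T.orderEmbOfFin hm with hembT
  set embC : Fin n ↪o Fin N := Tᶜ.orderEmbOfFin hn with hembC
  set f : Fin m ⊕ Fin n → Fin N := Sum.elim (embT ·) (embC ·) with hfdef
  have hinj : Function.Injective f := by
    rintro (a | a) (b | b) hab <;> simp only [hfdef, Sum.elim_inl, Sum.elim_inr] at hab
    · exact congrArg Sum.inl (embT.injective hab)
    · exact absurd (hab ▸ Finset.orderEmbOfFin_mem T hm a)
        (Finset.mem_compl.mp (Finset.orderEmbOfFin_mem Tᶜ hn b))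
    · exact absurd (hab ▸ Finset.orderEmbOfFin_mem T hm b)
        (Finset.mem_compl.mp (Finset.orderEmbOfFin_mem Tᶜ hn a))
    · exact congrArg Sum.inr (embC.injective hab)
  have hcard : Fintype.card (Fin m ⊕ Fin n) = Fintype.card (Fin N) := by
    simp [← hm, ← hn, Finset.card_add_card_compl]
  have hbij : Function.Bijective f :=
    (Fintype.bijective_iff_injective_and_card f).mpr ⟨hinj, hcard⟩
  set e : (Fin m ⊕ Fin n) ≃ Fin N := Equiv.ofBijective f hbij with hedef
  set Φ : ((Fin m → X) × (Fin n → X)) → (Fin N → X) := fun p =>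
    (MeasurableEquiv.piCongrLeft (fun _ : Fin N => X) e)
      ((MeasurableEquiv.sumPiEquivProdPi (fun _ : Fin m ⊕ Fin n => X)).symm p) with hΦdef
  have hΦ : MeasurePreserving Φ
      ((Measure.pi fun _ : Fin m => σ).prod (Measure.pi fun _ : Fin n => σ))
      (Measure.pi fun _ : Fin N => σ) :=
    (measurePreserving_piCongrLeft (fun _ : Fin N => σ) e).comp
      (measurePreserving_sumPiEquivProdPi_symm (fun _ : Fin m ⊕ Fin n => σ))
  have hΦl : ∀ (p : (Fin m → X) × (Fin n → X)) (i : Fin m), Φ p (embT i) = p.1 i := by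
    rintro ⟨ξ, η⟩ i
    show (MeasurableEquiv.piCongrLeft (fun _ : Fin N => X) e)
      ((MeasurableEquiv.sumPiEquivProdPi (fun _ : Fin m ⊕ Fin n => X)).symm (ξ, η))
        (e (Sum.inl i)) = ξ i
    rw [MeasurableEquiv.coe_piCongrLeft, MeasurableEquiv.coe_sumPiEquivProdPi_symm]
    exact Equiv.piCongrLeft_sumInl (fun _ : Fin N => X) e ξ η i
  have hΦr : ∀ (p : (Fin m → X) × (Fin n → X)) (j : Fin n), Φ p (embC j) = p.2 j := by
    rintro ⟨ξ, η⟩ j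
    show (MeasurableEquiv.piCongrLeft (fun _ : Fin N => X) e)
      ((MeasurableEquiv.sumPiEquivProdPi (fun _ : Fin m ⊕ Fin n => X)).symm (ξ, η))
        (e (Sum.inr j)) = η j
    rw [MeasurableEquiv.coe_piCongrLeft, MeasurableEquiv.coe_sumPiEquivProdPi_symm]
    exact Equiv.piCongrLeft_sumInr (fun _ : Fin N => X) e ξ η j
  have hTval : T.val = Multiset.map (embT ·) Finset.univ.val := by
    have h1 : Finset.univ.map embT.toEmbedding = T := by
      ext i
      simp only [Finset.mem_map, Finset.mem_univ, true_and]
      constructor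
      · rintro ⟨j, rfl⟩; exact Finset.orderEmbOfFin_mem T hm j
      · intro hi
        have : i ∈ Set.range embT := by rw [Finset.range_orderEmbOfFin]; exact hi
        obtain ⟨j, rfl⟩ := this; exact ⟨j, rfl⟩
    conv_lhs => rw [← h1]
    rfl
  have hCval : Tᶜ.val = Multiset.map (embC ·) Finset.univ.val := by
    have h1 : Finset.univ.map embC.toEmbedding = Tᶜ := by
      ext i
      simp only [Finset.mem_map, Finset.mem_univ, true_and]
      constructor
      · rintro ⟨j, rfl⟩; exact Finset.orderEmbOfFin_mem Tᶜ hn j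
      · intro hi
        have : i ∈ Set.range embC := by rw [Finset.range_orderEmbOfFin]; exact hi
        obtain ⟨j, rfl⟩ := this; exact ⟨j, rfl⟩
    conv_lhs => rw [← h1]
    rfl
  have hF : Measurable fun x : Fin N → X =>
      G ↑(List.ofFn x) * H (Multiset.map x T.val) (Multiset.map x Tᶜ.val) :=
    (hG N).mul (measH H hH T)
  rw [← hΦ.lintegral_comp hF]
  have key : ∀ p : (Fin m → X) × (Fin n → X),
      G ↑(List.ofFn (Φ p)) * H (Multiset.map (Φ p) T.val) (Multiset.map (Φ p) Tᶜ.val)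
        = G (↑(List.ofFn p.2) + ↑(List.ofFn p.1)) * H ↑(List.ofFn p.1) ↑(List.ofFn p.2) := by
    intro p
    have h1 : Multiset.map (Φ p) T.val = ↑(List.ofFn p.1) := by
      rw [hTval, Multiset.map_map, ofFn_coe]
      exact Multiset.map_congr rfl fun i _ => hΦl p i
    have h2 : Multiset.map (Φ p) Tᶜ.val = ↑(List.ofFn p.2) := by
      rw [hCval, Multiset.map_map, ofFn_coe]
      exact Multiset.map_congr rfl fun j _ => hΦr p j
    have huniv : (Finset.univ.val : Multiset (Fin N)) = T.val + Tᶜ.val := by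
      have hle : T.val ≤ Finset.univ.val := Finset.val_le_iff.mpr (Finset.subset_univ T)
      have hsub : (Finset.univ.val : Multiset (Fin N)) - T.val = Tᶜ.val := by
        rw [← Finset.sdiff_val, ← Finset.compl_eq_univ_sdiff]
      rw [← hsub, add_tsub_cancel_of_le hle]
    have h3 : (↑(List.ofFn (Φ p)) : Multiset X) = ↑(List.ofFn p.2) + ↑(List.ofFn p.1) := by
      rw [ofFn_coe, huniv, Multiset.map_add, h1, h2, add_comm]
    rw [h1, h2, h3]
  simp_rw [key]
  exact lintegral_prod _ (hpair G H hG hH m n).aemeasurable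

end
end LPAux

open LPAux in
/-- Minlos/Mecke-type combinatorial lemma for the Lebesgue–Poisson measure:
`∫∫ G(η ∪ ξ) H(ξ, η) dλ_σ(η) dλ_σ(ξ) = ∫ G(η) Σ_{ξ ⊆ η} H(ξ, η \ ξ) dλ_σ(η)`
for all non-negative measurable `G`, `H`. -/
theorem lebesguePoisson_combinatorial_lemma
    {X : Type*} [MeasurableSpace X] (σ : Measure X) [SigmaFinite σ]
    (G : Multiset X → ℝ≥0∞) (H : Multiset X → Multiset X → ℝ≥0∞)
    (hG : ∀ n : ℕ, Measurable fun x : Fin n → X => G ↑(List.ofFn x))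
    (hH : ∀ n m : ℕ, Measurable fun p : (Fin n → X) × (Fin m → X) =>
        H ↑(List.ofFn p.1) ↑(List.ofFn p.2)) :
    lebesguePoissonLIntegral σ
        (fun ξ => lebesguePoissonLIntegral σ (fun η => G (η + ξ) * H ξ η))
      = lebesguePoissonLIntegral σ
          (fun η => G η * ((η.antidiagonal.map fun p => H p.1 p.2).sum)) := by
  classical
  set I : ℕ → ℕ → ℝ≥0∞ := fun m n =>
    ∫⁻ ξ : Fin m → X, ∫⁻ η : Fin n → X,
      G (↑(List.ofFn η) + ↑(List.ofFn ξ)) * H ↑(List.ofFn ξ) ↑(List.ofFn η)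
      ∂(Measure.pi fun _ => σ) ∂(Measure.pi fun _ => σ) with hI
  have hLHS : lebesguePoissonLIntegral σ
        (fun ξ => lebesguePoissonLIntegral σ (fun η => G (η + ξ) * H ξ η))
      = ∑' m : ℕ, ∑' n : ℕ, (m.factorial : ℝ≥0∞)⁻¹ * ((n.factorial : ℝ≥0∞)⁻¹ * I m n) := by
    simp only [lebesguePoissonLIntegral]
    congr 1
    funext m
    rw [lintegral_tsum fun n => (((hpair G H hG hH m n).lintegral_prod_right').const_mul
      ((n.factorial : ℝ≥0∞)⁻¹)).aemeasurable]
    rw [← ENNReal.tsum_mul_left]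
    congr 1
    funext n
    rw [lintegral_const_mul _ ((hpair G H hG hH m n).lintegral_prod_right')]
  have hRHS : lebesguePoissonLIntegral σ
        (fun η => G η * ((η.antidiagonal.map fun p => H p.1 p.2).sum))
      = ∑' N : ℕ, ∑ m ∈ Finset.range (N + 1),
          (m.factorial : ℝ≥0∞)⁻¹ * (((N - m).factorial : ℝ≥0∞)⁻¹ * I m (N - m)) := by
    simp only [lebesguePoissonLIntegral]
    congr 1
    funext N
    have step1 : (∫⁻ x : Fin N → X,
        G ↑(List.ofFn x) * (((↑(List.ofFn x) : Multiset X).antidiagonal.map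
          fun p => H p.1 p.2).sum) ∂(Measure.pi fun _ => σ))
        = ∑ T : Finset (Fin N), ∫⁻ x : Fin N → X,
            G ↑(List.ofFn x) * H (Multiset.map x T.val) (Multiset.map x Tᶜ.val)
            ∂(Measure.pi fun _ => σ) := by
      rw [← lintegral_finset_sum _ (f := fun T x =>
        G ↑(List.ofFn x) * H (Multiset.map x T.val) (Multiset.map x Tᶜ.val)) fun T _ => (hG N).mul (measH H hH T)]
      congr 1
      funext x
      rw [antidiag_sum H x, Finset.mul_sum]
    rw [step1]
    have step2 : (∑ T : Finset (Fin N), ∫⁻ x : Fin N → X,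
          G ↑(List.ofFn x) * H (Multiset.map x T.val) (Multiset.map x Tᶜ.val)
          ∂(Measure.pi fun _ => σ))
        = ∑ m ∈ Finset.range (N + 1), (N.choose m : ℝ≥0∞) * I m (N - m) := by
      rw [← Finset.powerset_univ, Finset.sum_powerset]
      have hcu : (Finset.univ : Finset (Fin N)).card = N := by simp
      rw [hcu]
      refine Finset.sum_congr rfl fun m hm => ?_
      have hmN : m ≤ N := Nat.lt_succ_iff.mp (Finset.mem_range.mp hm)
      have hsum : ∀ T ∈ Finset.powersetCard m (Finset.univ : Finset (Fin N)),
          (∫⁻ x : Fin N → X,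
            G ↑(List.ofFn x) * H (Multiset.map x T.val) (Multiset.map x Tᶜ.val)
            ∂(Measure.pi fun _ => σ)) = I m (N - m) := by
        intro T hT
        have hTc : T.card = m := (Finset.mem_powersetCard.mp hT).2
        have hTcc : Tᶜ.card = N - m := by
          rw [Finset.card_compl, hTc, Fintype.card_fin]
        exact transfer σ G H hG hH T hTc hTcc
      rw [Finset.sum_congr rfl hsum, Finset.sum_const, Finset.card_powersetCard, hcu,
        nsmul_eq_mul]
    rw [step2, Finset.mul_sum]
    refine Finset.sum_congr rfl fun m hm => ?_
    have hmN : m ≤ N := Nat.lt_succ_iff.mp (Finset.mem_range.mp hm)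
    rw [← mul_assoc, fact_arith hmN, mul_assoc]
  rw [hLHS, hRHS, tsum_reindex (fun m n =>
    (m.factorial : ℝ≥0∞)⁻¹ * ((n.factorial : ℝ≥0∞)⁻¹ * I m n))]
end

section
/- Let φ be a positive pair potential on X × X with C(β) := ess sup_x ∫_X |e^{−βφ(x,y)} − 1| dσ(y) < ∞, and define the operator J on Ent_α(L¹(σ)) by (JL)(θ) := ∫_X θ(x) ∫₀¹ L((1+tθ)(e^{−βφ(x,·)} − 1) + tθ) dt dσ(x). Then J is a bounded linear operator on Ent_α(L¹(σ)) with operator norm bound ‖JL‖_α ≤ (e^{αC(β)}/α) ‖L‖_α. -/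
open MeasureTheory ENNReal

/-- `e^{−βφ}` for a potential value `φ ∈ [0,∞]` (with `e^{−β·∞} = 0`). -/
noncomputable def expNegE (β : ℝ) (t : ℝ≥0∞) : ℝ :=
  if t = ∞ then 0 else Real.exp (-(β * t.toReal))

lemma measurable_expNegE (β : ℝ) : Measurable (expNegE β) := by
  unfold expNegE
  exact Measurable.ite (measurableSet_eq) measurable_const
    (Real.measurable_exp.comp ((measurable_const.mul ENNReal.measurable_toReal).neg))

lemma expNegE_nonneg (β : ℝ) (t : ℝ≥0∞) : 0 ≤ expNegE β t := by
  unfold expNegE; split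
  · exact le_refl 0
  · exact (Real.exp_pos _).le

lemma expNegE_le_one {β : ℝ} (hβ : 0 ≤ β) (t : ℝ≥0∞) : expNegE β t ≤ 1 := by
  unfold expNegE; split
  · norm_num
  · rw [Real.exp_le_one_iff]
    simp only [neg_nonpos]
    exact mul_nonneg hβ ENNReal.toReal_nonneg

lemma key_int {α : ℝ} (hα : 0 < α) {N : ℝ} (hN : 0 ≤ N) :
    (∫ t in (0:ℝ)..1, Real.exp (α * N * t)) * N ≤ Real.exp (α * N) / α := by
  rcases eq_or_lt_of_le hN with h | h
  · subst h
    simp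
    positivity
  · set c := α * N with hc
    have hcpos : 0 < c := mul_pos hα h
    have hI : (∫ t in (0:ℝ)..1, Real.exp (c * t)) = (Real.exp c - 1) / c := by
      rw [intervalIntegral.integral_comp_mul_left (a := (0:ℝ)) (b := 1)
        (fun x => Real.exp x) hcpos.ne']
      simp [smul_eq_mul, div_eq_inv_mul]
    rw [hI, div_mul_eq_mul_div, hc]
    rw [div_le_div_iff₀ (by positivity) hα]
    nlinarith [Real.exp_pos (α * N), mul_pos hα h]


/-- For a positive pair potential `φ` with
`C(β) = ess sup_x ∫ |e^{−βφ(x,y)} − 1| dσ(y) < ∞`, the Bogoliubov integral operator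
`(JL)(θ) = ∫ θ(x) ∫₀¹ L((1+tθ)(e^{−βφ(x,·)} − 1) + tθ) dt dσ(x)` is bounded on
`Ent_α(L¹(σ))`: `|JL(θ)| ≤ (e^{αC(β)}/α) ‖L‖_α e^{α‖θ‖₁}` for all `θ ∈ L¹(σ)`, i.e.
`‖JL‖_α ≤ (e^{αC(β)}/α) ‖L‖_α`. -/
theorem bogoliubov_operator_bounded
    {X : Type*} [MeasurableSpace X] (σ : Measure X)
    (β α Cβ M : ℝ) (hβ : 0 < β) (hα : 0 < α) (hM : 0 ≤ M)
    (φ : X → X → ℝ≥0∞) (hφ_sym : ∀ x y, φ x y = φ y x)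
    (hφ_meas : Measurable (Function.uncurry φ))
    (hC : ∀ᵐ x ∂σ, Integrable (fun y => |expNegE β (φ x y) - 1|) σ ∧
      ∫ y, |expNegE β (φ x y) - 1| ∂σ ≤ Cβ)
    (L : (X → ℂ) → ℂ)
    (h_ent : ∀ θ₀ θ : X → ℂ, Differentiable ℂ (fun z : ℂ => L (fun x => θ₀ x + z * θ x)))
    (hL : ∀ θ : X → ℂ, Integrable θ σ →
      ‖L θ‖ ≤ M * Real.exp (α * ∫ x, ‖θ x‖ ∂σ)) :
    ∀ θ : X → ℂ, Integrable θ σ →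
      ‖∫ x, θ x * (∫ t in (0:ℝ)..1,
          L (fun y => (1 + (t : ℂ) * θ y) * ((expNegE β (φ x y) : ℂ) - 1) + (t : ℂ) * θ y)) ∂σ‖
        ≤ (Real.exp (α * Cβ) / α) * M * Real.exp (α * ∫ x, ‖θ x‖ ∂σ) := by
  intro θ hθ
  -- convert Complex.abs to norms
  have hL' : ∀ θ' : X → ℂ, Integrable θ' σ →
      ‖L θ'‖ ≤ M * Real.exp (α * ∫ x, ‖θ' x‖ ∂σ) := by
    intro θ' h
    exact hL θ' h
  set N : ℝ := ∫ x, ‖θ x‖ ∂σ with hNdef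
  have hNnorm : N = ∫ x, ‖θ x‖ ∂σ := by
    simp only [hNdef]
  have hN0 : 0 ≤ N := by
    rw [hNnorm]; exact integral_nonneg fun x => norm_nonneg _
  -- measurability of the potential factor
  have hEmeas : ∀ x : X, Measurable (fun y => expNegE β (φ x y)) := fun x =>
    (measurable_expNegE β).comp (hφ_meas.comp measurable_prodMk_left)
  set K : ℝ := M * Real.exp (α * Cβ) * ∫ t in (0:ℝ)..1, Real.exp (α * N * t) with hK
  -- a.e. bound on the inner integral
  have hbound : ∀ᵐ x ∂σ, ‖∫ t in (0:ℝ)..1,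
      L (fun y => (1 + (t : ℂ) * θ y) * ((expNegE β (φ x y) : ℂ) - 1) + (t : ℂ) * θ y)‖ ≤ K := by
    filter_upwards [hC] with x hx
    obtain ⟨hint, hCx⟩ := hx
    -- integrability of the pieces
    have hmeasE : AEStronglyMeasurable (fun y => ((expNegE β (φ x y) : ℝ) : ℂ)) σ :=
      (Complex.measurable_ofReal.comp (hEmeas x)).aestronglyMeasurable
    have hθ0 : Integrable (fun y => ((expNegE β (φ x y) : ℝ) : ℂ) - 1) σ := by
      apply Integrable.mono' hint (hmeasE.sub aestronglyMeasurable_const)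
      filter_upwards with y
      simp only [Pi.sub_apply]
      rw [show ((expNegE β (φ x y) : ℝ) : ℂ) - 1 = ((expNegE β (φ x y) - 1 : ℝ) : ℂ) by
        push_cast; ring, Complex.norm_real, Real.norm_eq_abs]
    have hθ1 : Integrable (fun y => θ y * ((expNegE β (φ x y) : ℝ) : ℂ)) σ := by
      apply Integrable.mono' hθ.norm (hθ.aestronglyMeasurable.mul hmeasE)
      filter_upwards with y
      simp only [Pi.mul_apply]
      rw [norm_mul, Complex.norm_real, Real.norm_eq_abs,
        abs_of_nonneg (expNegE_nonneg β (φ x y))]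
      exact mul_le_of_le_one_right (norm_nonneg _) (expNegE_le_one hβ.le _)
    -- rewrite the integrand
    have hre : (∫ t in (0:ℝ)..1,
        L (fun y => (1 + (t : ℂ) * θ y) * ((expNegE β (φ x y) : ℂ) - 1) + (t : ℂ) * θ y))
        = ∫ t in (0:ℝ)..1, L (fun y =>
            (((expNegE β (φ x y) : ℝ) : ℂ) - 1) + (t : ℂ) * (θ y * ((expNegE β (φ x y) : ℝ) : ℂ))) := by
      apply intervalIntegral.integral_congr
      intro t _
      dsimp only
      congr 1
      funext y
      ring
    rw [hre]
    -- continuity in t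
    have hcont : Continuous fun t : ℝ => L (fun y =>
        (((expNegE β (φ x y) : ℝ) : ℂ) - 1) + (t : ℂ) * (θ y * ((expNegE β (φ x y) : ℝ) : ℂ))) := by
      exact ((h_ent (fun y => ((expNegE β (φ x y) : ℝ) : ℂ) - 1)
        (fun y => θ y * ((expNegE β (φ x y) : ℝ) : ℂ))).continuous).comp
        Complex.continuous_ofReal
    -- pointwise-in-t bound
    have hpt : ∀ t ∈ Set.Icc (0:ℝ) 1, ‖L (fun y =>
        (((expNegE β (φ x y) : ℝ) : ℂ) - 1) + (t : ℂ) * (θ y * ((expNegE β (φ x y) : ℝ) : ℂ)))‖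
        ≤ M * Real.exp (α * Cβ) * Real.exp (α * N * t) := by
      intro t ht
      have hFt : Integrable (fun y =>
          (((expNegE β (φ x y) : ℝ) : ℂ) - 1) + (t : ℂ) * (θ y * ((expNegE β (φ x y) : ℝ) : ℂ))) σ :=
        hθ0.add (hθ1.const_mul _)
      have hptw : ∀ y, ‖(((expNegE β (φ x y) : ℝ) : ℂ) - 1)
          + (t : ℂ) * (θ y * ((expNegE β (φ x y) : ℝ) : ℂ))‖
          ≤ |expNegE β (φ x y) - 1| + t * ‖θ y‖ := by
        intro y
        have hE0 := expNegE_nonneg β (φ x y)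
        have hE1 := expNegE_le_one hβ.le (φ x y)
        calc ‖(((expNegE β (φ x y) : ℝ) : ℂ) - 1)
            + (t : ℂ) * (θ y * ((expNegE β (φ x y) : ℝ) : ℂ))‖
            ≤ ‖(((expNegE β (φ x y) : ℝ) : ℂ) - 1)‖
              + ‖(t : ℂ) * (θ y * ((expNegE β (φ x y) : ℝ) : ℂ))‖ := norm_add_le _ _
          _ = |expNegE β (φ x y) - 1| + t * (‖θ y‖ * expNegE β (φ x y)) := by
              rw [show ((expNegE β (φ x y) : ℝ) : ℂ) - 1
                  = ((expNegE β (φ x y) - 1 : ℝ) : ℂ) by push_cast; ring]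
              rw [Complex.norm_real, Real.norm_eq_abs, norm_mul, norm_mul,
                Complex.norm_real, Complex.norm_real, Real.norm_eq_abs, Real.norm_eq_abs,
                abs_of_nonneg ht.1, abs_of_nonneg hE0]
          _ ≤ |expNegE β (φ x y) - 1| + t * ‖θ y‖ := by
              have : t * (‖θ y‖ * expNegE β (φ x y)) ≤ t * ‖θ y‖ := by
                apply mul_le_mul_of_nonneg_left _ ht.1
                exact mul_le_of_le_one_right (norm_nonneg _) hE1
              linarith
      have hIb : ∫ y, ‖(((expNegE β (φ x y) : ℝ) : ℂ) - 1)
          + (t : ℂ) * (θ y * ((expNegE β (φ x y) : ℝ) : ℂ))‖ ∂σ ≤ Cβ + t * N := by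
        calc _ ≤ ∫ y, (|expNegE β (φ x y) - 1| + t * ‖θ y‖) ∂σ :=
              integral_mono hFt.norm (hint.add ((hθ.norm).const_mul t)) hptw
          _ = (∫ y, |expNegE β (φ x y) - 1| ∂σ) + t * ∫ y, ‖θ y‖ ∂σ := by
              rw [integral_add hint ((hθ.norm).const_mul t), integral_const_mul]
          _ ≤ Cβ + t * N := by
              rw [hNnorm]
              have : t * (∫ y, ‖θ y‖ ∂σ) ≤ t * ∫ y, ‖θ y‖ ∂σ := le_refl _
              linarith [hCx]
      calc ‖L _‖ ≤ M * Real.exp (α * ∫ y, ‖(((expNegE β (φ x y) : ℝ) : ℂ) - 1)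
              + (t : ℂ) * (θ y * ((expNegE β (φ x y) : ℝ) : ℂ))‖ ∂σ) := hL' _ hFt
        _ ≤ M * Real.exp (α * (Cβ + t * N)) := by
            apply mul_le_mul_of_nonneg_left _ hM
            exact Real.exp_le_exp.mpr (mul_le_mul_of_nonneg_left hIb hα.le)
        _ = M * Real.exp (α * Cβ) * Real.exp (α * N * t) := by
            rw [mul_assoc, ← Real.exp_add]
            ring_nf
    -- combine
    calc ‖∫ t in (0:ℝ)..1, L (fun y =>
          (((expNegE β (φ x y) : ℝ) : ℂ) - 1) + (t : ℂ) * (θ y * ((expNegE β (φ x y) : ℝ) : ℂ)))‖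
        ≤ ∫ t in (0:ℝ)..1, ‖L (fun y =>
          (((expNegE β (φ x y) : ℝ) : ℂ) - 1) + (t : ℂ) * (θ y * ((expNegE β (φ x y) : ℝ) : ℂ)))‖ :=
          intervalIntegral.norm_integral_le_integral_norm zero_le_one
      _ ≤ ∫ t in (0:ℝ)..1, M * Real.exp (α * Cβ) * Real.exp (α * N * t) := by
          apply intervalIntegral.integral_mono_on zero_le_one
            (hcont.norm.intervalIntegrable _ _)
            ((continuous_const.mul
              (Real.continuous_exp.comp (continuous_const.mul continuous_id))).intervalIntegrable _ _)
            hpt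
      _ = K := by rw [hK, intervalIntegral.integral_const_mul]
  -- outer estimate
  have hK0 : 0 ≤ K := by
    rw [hK]
    apply mul_nonneg (by positivity)
    apply intervalIntegral.integral_nonneg zero_le_one
    intro t _
    positivity
  calc ‖∫ x, θ x * (∫ t in (0:ℝ)..1,
        L (fun y => (1 + (t : ℂ) * θ y) * ((expNegE β (φ x y) : ℂ) - 1) + (t : ℂ) * θ y)) ∂σ‖
      ≤ ∫ x, ‖θ x * (∫ t in (0:ℝ)..1,
        L (fun y => (1 + (t : ℂ) * θ y) * ((expNegE β (φ x y) : ℂ) - 1) + (t : ℂ) * θ y))‖ ∂σ :=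
        norm_integral_le_integral_norm _
    _ ≤ ∫ x, K * ‖θ x‖ ∂σ := by
        apply integral_mono_of_nonneg (Filter.Eventually.of_forall fun x => norm_nonneg _)
          ((hθ.norm).const_mul K)
        filter_upwards [hbound] with x hx
        rw [norm_mul]
        calc ‖θ x‖ * _ ≤ ‖θ x‖ * K := mul_le_mul_of_nonneg_left hx (norm_nonneg _)
          _ = K * ‖θ x‖ := mul_comm _ _
    _ = K * N := by rw [integral_const_mul, hNnorm]
    _ ≤ (Real.exp (α * Cβ) / α) * M * Real.exp (α * N) := by
        rw [hK]
        have h1 : (∫ t in (0:ℝ)..1, Real.exp (α * N * t)) * N ≤ Real.exp (α * N) / α :=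
          key_int hα hN0
        calc M * Real.exp (α * Cβ) * (∫ t in (0:ℝ)..1, Real.exp (α * N * t)) * N
            = M * Real.exp (α * Cβ) * ((∫ t in (0:ℝ)..1, Real.exp (α * N * t)) * N) := by ring
          _ ≤ M * Real.exp (α * Cβ) * (Real.exp (α * N) / α) :=
              mul_le_mul_of_nonneg_left h1 (by positivity)
          _ = (Real.exp (α * Cβ) / α) * M * Real.exp (α * N) := by ring
end

section
/- (Taylor expansion via Lebesgue–Poisson integral) Let A be an entire functional of bounded type on L¹(σ) with variational derivatives (D^{|η|}A)(θ₀; η) ∈ L^∞(Xⁿ, σ^{⊗n}) for η ∈ Γ_X^{(n)}, satisfying ‖(DⁿA)(θ₀;·)‖_∞ ≤ n!(e/r)ⁿ M_r where M_r = sup_{‖θ'‖≤r}|A(θ₀+θ')|. Then for every θ ∈ L¹(σ) with ‖θ‖_{L¹(σ)} < ∞, A(θ₀ + θ) = ∫_{Γ₀} e_λ(θ, η) (D^{|η|}A)(θ₀; η) dλ_σ(η) = Σ_{n=0}^∞ (1/n!) ∫_{Xⁿ} (DⁿA)(θ₀; x₁,...,xₙ) ∏ᵢ θ(xᵢ) dσ^{⊗n},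 with the series converging absolutely (choose r > e‖θ‖_{L¹}). -/
open MeasureTheory

/-- Taylor expansion of an entire functional of bounded type on `L¹(σ)` as a
Lebesgue–Poisson integral: with kernels `Dⁿ` representing the differentials at `θ₀` and
satisfying the Cauchy bound `|Dⁿ| ≤ n!(e/r)ⁿ M` a.e. for some `r > e‖θ‖_{L¹}`,
`A(θ₀+θ) = Σₙ (1/n!) ∫_{Xⁿ} Dⁿ(x) ∏ᵢ θ(xᵢ) dσ^{⊗n}`, with absolute convergence. -/
theorem taylor_expansion_lebesguePoisson
    {X : Type*} [MeasurableSpace X] (σ : Measure X) [SigmaFinite σ]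
    (A : (X → ℂ) → ℂ) (θ₀ θ : X → ℂ) (hθ : Integrable θ σ)
    (D : (n : ℕ) → (Fin n → X) → ℂ) (hD_meas : ∀ n, Measurable (D n))
    (h_ent : Differentiable ℂ (fun z : ℂ => A (fun x => θ₀ x + z * θ x)))
    (h_rep : ∀ n : ℕ, iteratedDeriv n (fun z : ℂ => A (fun x => θ₀ x + z * θ x)) 0
      = ∫ x : Fin n → X, D n x * ∏ i, θ (x i) ∂(Measure.pi fun _ => σ))
    (r M : ℝ) (hM : 0 ≤ M)
    (hr : Real.exp 1 * ∫ x, ‖θ x‖ ∂σ < r)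
    (h_bd : ∀ n : ℕ, ∀ᵐ x ∂(Measure.pi fun _ : Fin n => σ),
      ‖D n x‖ ≤ (n.factorial : ℝ) * (Real.exp 1 / r) ^ n * M) :
    Summable (fun n : ℕ => ((n.factorial : ℝ))⁻¹ *
        ∫ x : Fin n → X, ‖D n x‖ * ∏ i, ‖θ (x i)‖
          ∂(Measure.pi fun _ => σ)) ∧
    A (fun x => θ₀ x + θ x)
      = ∑' n : ℕ, ((n.factorial : ℂ))⁻¹ *
          ∫ x : Fin n → X, D n x * ∏ i, θ (x i) ∂(Measure.pi fun _ => σ) := by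
  letI : MeasureSpace X := ⟨σ⟩
  haveI : SigmaFinite (volume : Measure X) := ‹SigmaFinite σ›
  set c : ℝ := ∫ x, ‖θ x‖ ∂σ with hc_def
  have hc : 0 ≤ c := integral_nonneg fun x => norm_nonneg _
  have hr0 : 0 < r :=
    lt_of_le_of_lt (mul_nonneg (Real.exp_pos 1).le hc) hr
  have hθabs : Integrable (fun x => ‖θ x‖) σ := by
    exact hθ.norm
  constructor
  · -- Summability
    set q : ℝ := Real.exp 1 * c / r with hq_def
    have hq0 : 0 ≤ q := div_nonneg (mul_nonneg (Real.exp_pos 1).le hc) hr0.le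
    have hq1 : q < 1 := (div_lt_one hr0).mpr hr
    have key : ∀ n : ℕ, ((n.factorial : ℝ))⁻¹ *
        (∫ x : Fin n → X, ‖D n x‖ * ∏ i, ‖θ (x i)‖
          ∂(Measure.pi fun _ => σ)) ≤ M * q ^ n := by
      intro n
      set C : ℝ := (n.factorial : ℝ) * (Real.exp 1 / r) ^ n * M with hC_def
      have hg : Integrable (fun x : Fin n → X => ∏ i, ‖θ (x i)‖)
          (Measure.pi fun _ => σ) :=
        Integrable.fintype_prod (f := fun _ : Fin n => fun x => ‖θ x‖)
          fun _ => hθabs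
      have hgnn : ∀ x : Fin n → X, 0 ≤ ∏ i, ‖θ (x i)‖ := fun x =>
        Finset.prod_nonneg fun i _ => norm_nonneg _
      have hle : ∀ᵐ x ∂(Measure.pi fun _ : Fin n => σ),
          ‖D n x‖ * ∏ i, ‖θ (x i)‖
            ≤ C * ∏ i, ‖θ (x i)‖ := by
        filter_upwards [h_bd n] with x hx
        exact mul_le_mul_of_nonneg_right hx (hgnn x)
      have hint : Integrable
          (fun x : Fin n → X => ‖D n x‖ * ∏ i, ‖θ (x i)‖)
          (Measure.pi fun _ => σ) := by
        refine Integrable.mono' (hg.const_mul C) ?_ ?_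
        · exact (((hD_meas n).norm).aemeasurable.aestronglyMeasurable.mul
            hg.aestronglyMeasurable).congr (by
              filter_upwards with x
              simp)
        · filter_upwards [hle] with x hx
          have h1 : 0 ≤ ‖D n x‖ * ∏ i, ‖θ (x i)‖ :=
            mul_nonneg (norm_nonneg _) (hgnn x)
          simpa [Real.norm_eq_abs, abs_of_nonneg h1] using hx
      have h2 : (∫ x : Fin n → X, ‖D n x‖ * ∏ i, ‖θ (x i)‖
          ∂(Measure.pi fun _ => σ)) ≤ C * c ^ n := by
        calc (∫ x : Fin n → X, ‖D n x‖ * ∏ i, ‖θ (x i)‖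
              ∂(Measure.pi fun _ => σ))
            ≤ ∫ x : Fin n → X, C * ∏ i, ‖θ (x i)‖
              ∂(Measure.pi fun _ => σ) := integral_mono_ae hint (hg.const_mul C) hle
          _ = C * ∫ x : Fin n → X, ∏ i, ‖θ (x i)‖
              ∂(Measure.pi fun _ => σ) := integral_const_mul _ _
          _ = C * c ^ n := by
              rw [show (∫ x : Fin n → X, ∏ i, ‖θ (x i)‖
                ∂(Measure.pi fun _ => σ)) = (∫ x, ‖θ x‖ ∂σ) ^ (Fintype.card (Fin n))
                from integral_fintype_prod_eq_pow (ι := Fin n) (fun x => ‖θ x‖)]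
              simp [hc_def]
      have hfac : (0 : ℝ) < (n.factorial : ℝ) := by positivity
      calc ((n.factorial : ℝ))⁻¹ *
            (∫ x : Fin n → X, ‖D n x‖ * ∏ i, ‖θ (x i)‖
              ∂(Measure.pi fun _ => σ))
          ≤ ((n.factorial : ℝ))⁻¹ * (C * c ^ n) := by
            exact mul_le_mul_of_nonneg_left h2 (by positivity)
        _ = M * q ^ n := by
            have h3 : ((n.factorial : ℝ))⁻¹ * (n.factorial : ℝ) = 1 :=
              inv_mul_cancel₀ hfac.ne'
            have h4 : Real.exp 1 / r * c = q := by rw [hq_def]; ring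
            calc ((n.factorial : ℝ))⁻¹ * (C * c ^ n)
                = (((n.factorial : ℝ))⁻¹ * (n.factorial : ℝ)) *
                    ((Real.exp 1 / r * c) ^ n * M) := by rw [hC_def, mul_pow]; ring
              _ = M * q ^ n := by rw [h3, h4, one_mul]; ring
    refine Summable.of_nonneg_of_le (fun n => ?_) key
      (((summable_geometric_of_lt_one hq0 hq1).mul_left M))
    · refine mul_nonneg (by positivity) (integral_nonneg fun x => ?_)
      exact mul_nonneg (norm_nonneg _) (Finset.prod_nonneg fun i _ =>
        norm_nonneg _)
  · -- Taylor expansion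
    have h := Complex.taylorSeries_eq_of_entire' (c := 0) (z := 1) h_ent
    simp only [sub_zero, one_pow, mul_one, h_rep, one_mul] at h
    exact h.symm
end
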